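/- Let (V, ν, τ, τ*) be a PN space with τ, τ* sup-continuous and W a linear subspace of V, and let ν̄_{p+W} := sup_{q∈W} ν_{p+q}. Then (V/W, ν̄, τ, τ*) is a PN space (i.e., ν̄_{p+W} = ε₀ implies p ∈ W) if and only if W is closed in the strong topology of (V, ν, τ, τ*). -/

import Mathlib

open Filter Topology Set

/-- A distribution function in `Δ⁺`: nondecreasing, left-continuous,
vanishing on `(-∞,0]` and bounded by `1`. -/
structure DistFun where
  toFun : ℝ → ℝ
  mono' : Monotone toFun
  leftCont' : ∀ x, Filter.Tendsto toFun (nhdsWithin x (Set.Iio x)) (nhds (toFun x))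
  zero' : ∀ x ≤ (0 : ℝ), toFun x = 0
  le_one' : ∀ x, toFun x ≤ 1

instance : CoeFun DistFun (fun _ => ℝ → ℝ) := ⟨DistFun.toFun⟩

/-- Pointwise order on `Δ⁺`. -/
instance : LE DistFun := ⟨fun F G => ∀ x, F.toFun x ≤ G.toFun x⟩

/-- The unit step distribution function `ε_a` for `a ≥ 0`. -/
noncomputable def unitStep (a : ℝ) (_ha : 0 ≤ a) : DistFun where
  toFun x := if x ≤ a then 0 else 1
  mono' := by
    intro x y hxy
    by_cases hx : x ≤ a <;> by_cases hy : y ≤ a <;> simp [hx, hy] <;> linarith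
  leftCont' := by
    intro x
    by_cases hx : x ≤ a
    · have h : (fun y => if y ≤ a then (0:ℝ) else 1) =ᶠ[nhdsWithin x (Set.Iio x)]
          fun _ => (0:ℝ) := by
        filter_upwards [self_mem_nhdsWithin] with y hy
        exact if_pos ((le_of_lt hy).trans hx)
      simpa [if_pos hx] using (tendsto_const_nhds (α := ℝ)).congr' h.symm
    · have hax : a < x := lt_of_not_ge hx
      have h : (fun y => if y ≤ a then (0:ℝ) else 1) =ᶠ[nhdsWithin x (Set.Iio x)]
          fun _ => (1:ℝ) := by
        filter_upwards [(eventually_gt_nhds hax).filter_mono nhdsWithin_le_nhds] with y hy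
        exact if_neg (not_le.mpr hy)
      simpa [if_neg hx] using (tendsto_const_nhds (α := ℝ)).congr' h.symm
  zero' := fun x hx => if_pos (hx.trans _ha)
  le_one' := by intro x; by_cases h : x ≤ a <;> simp [h]

/-- The maximal element `ε₀` of `Δ⁺`. -/
noncomputable def eps0 : DistFun := unitStep 0 le_rfl

/-- The one-sided Lévy condition `(F,G;h)`. -/
def levyCond (F G : DistFun) (h : ℝ) : Prop :=
  ∀ x : ℝ, -(1/h) < x → x < 1/h →
    F.toFun (x - h) - h ≤ G.toFun x ∧ G.toFun x ≤ F.toFun (x + h) + h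

/-- The Sibley (modified Lévy) metric on `Δ⁺`. -/
noncomputable def sibley (F G : DistFun) : ℝ :=
  sInf {h : ℝ | 0 < h ∧ h ≤ 1 ∧ levyCond F G h ∧ levyCond G F h}

/-- Triangle function: associative, commutative, nondecreasing binary
operation on `Δ⁺` with identity `ε₀`. -/
structure IsTriangleFun (τ : DistFun → DistFun → DistFun) : Prop where
  comm : ∀ F G, τ F G = τ G F
  assoc : ∀ F G H, τ (τ F G) H = τ F (τ G H)
  mono : ∀ F G H, F ≤ G → τ F H ≤ τ G H
  ident : ∀ F, τ F eps0 = F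

/-- Continuity of a triangle function w.r.t. the Sibley metric (sequential form). -/
def TriCont (τ : DistFun → DistFun → DistFun) : Prop :=
  ∀ (F G : ℕ → DistFun) (F₀ G₀ : DistFun),
    Filter.Tendsto (fun n => sibley (F n) F₀) Filter.atTop (nhds 0) →
    Filter.Tendsto (fun n => sibley (G n) G₀) Filter.atTop (nhds 0) →
    Filter.Tendsto (fun n => sibley (τ (F n) (G n)) (τ F₀ G₀)) Filter.atTop (nhds 0)

/-- Sup-continuity of a triangle function: `τ (sup_i F_i) G = sup_i τ (F_i) G`
(pointwise). -/
def SupCont (τ : DistFun → DistFun → DistFun) : Prop :=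
  ∀ {ι : Type} [Nonempty ι] (F : ι → DistFun) (S G : DistFun),
    (∀ x, S.toFun x = ⨆ i, (F i).toFun x) →
    ∀ x, (τ S G).toFun x = ⨆ i, (τ (F i) G).toFun x

/-- Domination `τ₁ ≫ τ₂` of triangle functions. -/
def Dominates (τ₁ τ₂ : DistFun → DistFun → DistFun) : Prop :=
  ∀ F₁ F₂ G₁ G₂, τ₂ (τ₁ F₁ F₂) (τ₁ G₁ G₂) ≤ τ₁ (τ₂ F₁ G₁) (τ₂ F₂ G₂)

/-- A probabilistic pseudo-normed space `(V, ν, τ, τ*)`. -/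
structure IsPPNSpace {V : Type*} [AddCommGroup V] [Module ℝ V]
    (ν : V → DistFun) (τ τs : DistFun → DistFun → DistFun) : Prop where
  tri : IsTriangleFun τ
  tri_s : IsTriangleFun τs
  cont : TriCont τ
  cont_s : TriCont τs
  tau_le : ∀ F G, τ F G ≤ τs F G
  N1' : ν 0 = eps0
  N2 : ∀ p, ν (-p) = ν p
  N3 : ∀ p q, τ (ν p) (ν q) ≤ ν (p + q)
  N4 : ∀ (p : V) (α : ℝ), 0 ≤ α → α ≤ 1 →
    ν p ≤ τs (ν (α • p)) (ν ((1 - α) • p))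

/-- A probabilistic normed space `(V, ν, τ, τ*)`. -/
structure IsPNSpace {V : Type*} [AddCommGroup V] [Module ℝ V]
    (ν : V → DistFun) (τ τs : DistFun → DistFun → DistFun)
    extends IsPPNSpace ν τ τs : Prop where
  N1 : ∀ p, ν p = eps0 ↔ p = 0

/-- The strong topology of a PN space, generated by the strong neighbourhoods
`N_p(t) = {q : ν_{q-p}(t) > 1 - t}`. -/
def strongTop {V : Type*} [AddCommGroup V] (ν : V → DistFun) : TopologicalSpace V :=
  TopologicalSpace.generateFrom
    {S | ∃ (p : V) (t : ℝ), 0 < t ∧ S = {q | 1 - t < (ν (q - p)).toFun t}}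

/-- A set is closed in the strong topology. -/
def StrongClosed {V : Type*} [AddCommGroup V] (ν : V → DistFun) (S : Set V) : Prop :=
  @IsClosed V (strongTop ν) S

/-- A strong Cauchy sequence. -/
def StrongCauchy {V : Type*} [AddCommGroup V] (ν : V → DistFun) (p : ℕ → V) : Prop :=
  ∀ t : ℝ, 0 < t → ∃ N : ℕ, ∀ m n, N ≤ m → N ≤ n → 1 - t < (ν (p n - p m)).toFun t

/-- Strong convergence of a sequence to a point. -/
def StrongConv {V : Type*} [AddCommGroup V] (ν : V → DistFun) (p : ℕ → V) (x : V) : Prop :=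
  ∀ t : ℝ, 0 < t → ∃ N : ℕ, ∀ n, N ≤ n → 1 - t < (ν (p n - x)).toFun t

/-- Strong completeness. -/
def StrongComplete {V : Type*} [AddCommGroup V] (ν : V → DistFun) : Prop :=
  ∀ p : ℕ → V, StrongCauchy ν p → ∃ x, StrongConv ν p x

section Aux

theorem DistFun.ext' {F G : DistFun} (h : F.toFun = G.toFun) : F = G := by
  cases F; cases G; simpa using h

theorem DistFun.le_def {F G : DistFun} : F ≤ G ↔ ∀ x, F.toFun x ≤ G.toFun x := Iff.rfl

theorem DistFun.nonneg (F : DistFun) (x : ℝ) : 0 ≤ F.toFun x := by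
  rcases le_or_gt x 0 with h | h
  · rw [F.zero' x h]
  · calc (0:ℝ) = F.toFun 0 := (F.zero' 0 le_rfl).symm
      _ ≤ F.toFun x := F.mono' h.le

theorem eps0_apply (x : ℝ) : eps0.toFun x = if x ≤ 0 then 0 else 1 := rfl

theorem eps0_apply_pos {x : ℝ} (hx : 0 < x) : eps0.toFun x = 1 := by
  simp [eps0_apply, not_le.mpr hx]

/-- The defining set for the Sibley metric. -/
def sibleySet (F G : DistFun) : Set ℝ :=
  {h : ℝ | 0 < h ∧ h ≤ 1 ∧ levyCond F G h ∧ levyCond G F h}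

theorem sibley_eq (F G : DistFun) : sibley F G = sInf (sibleySet F G) := rfl

theorem one_mem_sibleySet (F G : DistFun) : (1:ℝ) ∈ sibleySet F G := by
  refine ⟨one_pos, le_rfl, ?_, ?_⟩ <;>
  · intro x _ hx1
    constructor
    · rw [DistFun.zero' _ _ (by linarith)]
      have := DistFun.nonneg
      linarith [DistFun.nonneg G x, DistFun.nonneg F x]
    · linarith [DistFun.le_one' G x, DistFun.le_one' F x,
        DistFun.nonneg F (x+1), DistFun.nonneg G (x+1)]

theorem sibleySet_nonempty (F G : DistFun) : (sibleySet F G).Nonempty :=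
  ⟨1, one_mem_sibleySet F G⟩

theorem sibleySet_bddBelow (F G : DistFun) : BddBelow (sibleySet F G) :=
  ⟨0, fun h hh => hh.1.le⟩

theorem sibley_nonneg (F G : DistFun) : 0 ≤ sibley F G :=
  le_csInf (sibleySet_nonempty F G) (fun h hh => hh.1.le)

theorem sibley_self (F : DistFun) : sibley F F = 0 := by
  refine le_antisymm ?_ (sibley_nonneg F F)
  by_contra hpos
  push_neg at hpos
  have hmem : ∀ t : ℝ, 0 < t → t ≤ 1 → sibley F F ≤ t := by
    intro t ht ht1
    refine csInf_le (sibleySet_bddBelow F F) ⟨ht, ht1, ?_, ?_⟩ <;>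
    · intro x _ _
      exact ⟨by linarith [F.mono' (show x - t ≤ x by linarith)],
        by linarith [F.mono' (show x ≤ x + t by linarith)]⟩
  have h1 := hmem (min (sibley F F / 2) 1) (by positivity) (min_le_right _ _)
  have h2 : min (sibley F F / 2) 1 ≤ sibley F F / 2 := min_le_left _ _
  linarith

/-- Lemma A: if `F t > 1 - t` then `sibley F eps0 ≤ t`. -/
theorem sibley_le_eps0 {F : DistFun} {t : ℝ} (ht : 0 < t) (ht1 : t ≤ 1)
    (hFt : 1 - t < F.toFun t) : sibley F eps0 ≤ t := by
  refine csInf_le (sibleySet_bddBelow F eps0) ⟨ht, ht1, ?_, ?_⟩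
  · intro x _ _
    constructor
    · rcases le_or_gt x 0 with hx | hx
      · rw [eps0_apply, if_pos hx, F.zero' _ (by linarith)]
        linarith
      · rw [eps0_apply_pos hx]
        linarith [F.le_one' (x - t)]
    · rcases le_or_gt x 0 with hx | hx
      · rw [eps0_apply, if_pos hx]
        linarith [F.nonneg (x + t)]
      · rw [eps0_apply_pos hx]
        have : F.toFun t ≤ F.toFun (x + t) := F.mono' (by linarith)
        linarith
  · intro x _ _
    constructor
    · rcases le_or_gt (x - t) 0 with hx | hx
      · rw [eps0_apply, if_pos hx]
        linarith [F.nonneg x]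
      · rw [eps0_apply_pos hx]
        have : F.toFun t ≤ F.toFun x := F.mono' (by linarith)
        linarith
    · rcases le_or_gt (x + t) 0 with hx | hx
      · rw [eps0_apply, if_pos hx, F.zero' _ (by linarith)]
        linarith
      · rw [eps0_apply_pos hx]
        linarith [F.le_one' x]

/-- Lemma C: if `H n → F` in the Sibley metric and `F t > 1 - t` with `t > 0`,
then eventually `H n t > 1 - t`. -/
theorem eventually_gt_of_sibley_tendsto {F : DistFun} {t : ℝ} (ht : 0 < t)
    (hFt : 1 - t < F.toFun t) (H : ℕ → DistFun)
    (hconv : Filter.Tendsto (fun n => sibley (H n) F) Filter.atTop (nhds 0)) :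
    ∀ᶠ n in Filter.atTop, 1 - t < (H n).toFun t := by
  set c := F.toFun t - (1 - t) with hc
  have hcpos : 0 < c := by linarith
  -- left continuity gives l < t with F y > F t - c/2 on (l, t)
  have hev : ∀ᶠ y in nhdsWithin t (Set.Iio t), F.toFun t - c/2 < F.toFun y :=
    (F.leftCont' t).eventually (eventually_gt_nhds (by linarith))
  rw [Filter.eventually_iff, mem_nhdsLT_iff_exists_Ioo_subset] at hev
  obtain ⟨l, hl, hIoo⟩ := hev
  have hlt : l < t := hl
  set δ : ℝ := min (min (c/2) (t - l)) (1/t) with hδ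
  have hδpos : 0 < δ := by
    refine lt_min (lt_min (by linarith) (by linarith)) (by positivity)
  filter_upwards [hconv.eventually (eventually_lt_nhds hδpos)] with n hn
  have hlt' : sInf (sibleySet (H n) F) < δ := hn
  obtain ⟨h, hmem, hhδ⟩ :=
    (csInf_lt_iff (sibleySet_bddBelow _ _) (sibleySet_nonempty _ _)).mp hlt'
  obtain ⟨hh0, hh1, _, hFHn⟩ := hmem
  have hhc : h < c/2 := lt_of_lt_of_le hhδ (le_trans (min_le_left _ _) (min_le_left _ _))
  have hhl : h < t - l := lt_of_lt_of_le hhδ (le_trans (min_le_left _ _) (min_le_right _ _))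
  have hht : h < 1/t := lt_of_lt_of_le hhδ (min_le_right _ _)
  have ht1h : t < 1/h := by
    rw [lt_div_iff₀ ht] at hht
    rw [lt_div_iff₀ hh0]
    nlinarith
  have hneg : -(1/h) < t := by
    have : 0 < 1/h := by positivity
    linarith
  have hkey := (hFHn t hneg ht1h).1
  -- t - h ∈ Ioo l t
  have hmemIoo : t - h ∈ Set.Ioo l t := ⟨by linarith, by linarith⟩
  have := hIoo hmemIoo
  simp only [Set.mem_setOf_eq] at this
  have hc2 : F.toFun t - c/2 = 1 - t + c/2 := by rw [hc]; ring
  linarith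

end Aux
section Main

theorem bdd_distfun {ι : Sort*} (f : ι → DistFun) (x : ℝ) :
    BddAbove (Set.range fun i => (f i).toFun x) :=
  ⟨1, by rintro y ⟨i, rfl⟩; exact (f i).le_one' x⟩

theorem iSup_range_apply {α : Type*} [Nonempty α] (g : α → DistFun) (x : ℝ) :
    ⨆ i : Set.range g, (i : Set.range g).1.toFun x = ⨆ a, (g a).toFun x := by
  haveI : Nonempty (Set.range g) := (Set.range_nonempty g).to_subtype
  apply le_antisymm
  · refine ciSup_le ?_
    rintro ⟨F, a, rfl⟩
    exact le_ciSup (bdd_distfun g x) a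
  · exact ciSup_le fun a =>
      le_ciSup (bdd_distfun (fun i : Set.range g => i.1) x) ⟨g a, a, rfl⟩

theorem quotient_PN_iff_closed' {V : Type*} [AddCommGroup V] [Module ℝ V]
    (ν : V → DistFun) (τ τs : DistFun → DistFun → DistFun)
    (h : IsPNSpace ν τ τs) (hτ : SupCont τ) (hτs : SupCont τs)
    (W : Submodule ℝ V)
    (ν' : V ⧸ W → DistFun)
    (hν' : ∀ (p : V) (x : ℝ),
      (ν' (W.mkQ p)).toFun x = ⨆ q : W, (ν (p + (q : V))).toFun x) :
    IsPNSpace ν' τ τs ↔ StrongClosed ν (W : Set V) := by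
  haveI : Nonempty W := ⟨0⟩
  have hb : ∀ (p : V) (x : ℝ), BddAbove (Set.range fun q : W => (ν (p + (q:V))).toFun x) :=
    fun p x => bdd_distfun _ x
  -- if p is strongly approximated by W, then ν' (mkQ p) = eps0
  have happrox : ∀ p : V, (∀ t : ℝ, 0 < t → ∃ q ∈ W, 1 - t < (ν (q - p)).toFun t) →
      ν' (W.mkQ p) = eps0 := by
    intro p hp
    apply DistFun.ext'
    funext x
    rw [hν', eps0_apply]
    rcases le_or_gt x 0 with hx | hx
    · rw [if_pos hx]
      have hz : ∀ q : W, (ν (p + (q:V))).toFun x = 0 := fun q => (ν _).zero' x hx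
      calc ⨆ q : W, (ν (p + (q:V))).toFun x = ⨆ _ : W, (0:ℝ) := by
            exact iSup_congr hz
        _ = 0 := ciSup_const
    · rw [if_neg (not_le.mpr hx)]
      apply le_antisymm (ciSup_le fun q => (ν _).le_one' x)
      -- show 1 ≤ sup
      by_contra hcon
      push_neg at hcon
      set s := ⨆ q : W, (ν (p + (q:V))).toFun x with hs
      have hkey : ∀ ε : ℝ, 0 < ε → 1 - ε ≤ s := by
        intro ε hε
        set t := min ε x with htdef
        have ht : 0 < t := lt_min hε hx
        obtain ⟨q, hqW, hq⟩ := hp t ht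
        have e1 : ν (q - p) = ν (p + (-(⟨q, hqW⟩ : W) : W)) := by
          have harg : (q:V) - p = -(p + ((-(⟨q, hqW⟩ : W) : W) : V)) := by
            simp only [Submodule.coe_neg]
            abel
          rw [harg, h.N2]
        have e2 : (ν (p + ((-(⟨q, hqW⟩ : W) : W) : V))).toFun t
            ≤ (ν (p + ((-(⟨q, hqW⟩ : W) : W) : V))).toFun x :=
          (ν _).mono' (min_le_right ε x)
        have e3 : (ν (p + ((-(⟨q, hqW⟩ : W) : W) : V))).toFun x ≤ s :=
          le_ciSup (hb p x) _
        rw [e1] at hq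
        have : 1 - t ≤ s := by linarith
        have : 1 - ε ≤ 1 - t := by
          have : t ≤ ε := min_le_left _ _
          linarith
        linarith
      have := hkey ((1 - s)/2) (by linarith)
      linarith
  -- eps0 is the quotient norm of 0
  have hN1' : ν' 0 = eps0 := by
    have h0 : (0 : V ⧸ W) = W.mkQ 0 := (map_zero _).symm
    rw [h0]
    apply happrox
    intro t ht
    refine ⟨0, W.zero_mem, ?_⟩
    rw [show (0:V) - 0 = 0 by abel, h.N1', eps0_apply_pos ht]
    linarith
  constructor
  · -- PN space → closed
    intro hPN
    letI : TopologicalSpace V := strongTop ν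
    show IsClosed (W : Set V)
    rw [← isOpen_compl_iff, isOpen_iff_forall_mem_open]
    intro p hp
    have hex : ∃ t : ℝ, 0 < t ∧ ∀ q ∈ W, (ν (q - p)).toFun t ≤ 1 - t := by
      by_contra hcon
      push_neg at hcon
      have := happrox p (fun t ht => hcon t ht)
      exact hp ((Submodule.Quotient.mk_eq_zero W).mp ((hPN.N1 _).mp this))
    obtain ⟨t, ht, hall⟩ := hex
    refine ⟨{q | 1 - t < (ν (q - p)).toFun t}, ?_, ?_, ?_⟩
    · intro q hq
      simp only [Set.mem_setOf_eq] at hq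
      intro hqW
      exact absurd hq (not_lt.mpr (hall q hqW))
    · exact TopologicalSpace.isOpen_generateFrom_of_mem ⟨p, t, ht, rfl⟩
    · show 1 - t < (ν (p - p)).toFun t
      rw [show p - p = 0 by abel, h.N1', eps0_apply_pos ht]
      linarith
  · -- closed → PN space
    intro hcl
    refine ⟨⟨h.tri, h.tri_s, h.cont, h.cont_s, h.tau_le, hN1', ?_, ?_, ?_⟩, ?_⟩
    · -- N2
      intro P
      obtain ⟨p, rfl⟩ := W.mkQ_surjective P
      have hneg : -W.mkQ p = W.mkQ (-p) := (map_neg _ _).symm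
      apply DistFun.ext'
      funext x
      rw [hneg, hν', hν']
      have key : ∀ (r : V) (q : W), ν (-r + (q:V)) = ν (r + ((-q : W) : V)) := by
        intro r q
        have harg : -r + (q:V) = -(r + ((-q : W) : V)) := by
          simp only [Submodule.coe_neg]; abel
        rw [harg, h.N2]
      apply le_antisymm
      · refine ciSup_le fun q => ?_
        rw [key p q]
        exact le_ciSup (hb p x) (-q)
      · refine ciSup_le fun q => ?_
        have : ν (p + (q:V)) = ν (-p + ((-q : W) : V)) := by
          rw [key p (-q), neg_neg]
        rw [this]
        exact le_ciSup (hb (-p) x) (-q)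
    · -- N3
      intro P Q
      obtain ⟨p, rfl⟩ := W.mkQ_surjective P
      obtain ⟨p', rfl⟩ := W.mkQ_surjective Q
      have hadd : W.mkQ p + W.mkQ p' = W.mkQ (p + p') := (map_add _ _ _).symm
      rw [hadd, DistFun.le_def]
      intro x
      set g : W → DistFun := fun q => ν (p + (q:V)) with hg
      set g' : W → DistFun := fun q => ν (p' + (q:V)) with hg'
      haveI : Nonempty (Set.range g) := (Set.range_nonempty g).to_subtype
      haveI : Nonempty (Set.range g') := (Set.range_nonempty g').to_subtype
      have hS : ∀ y, (ν' (W.mkQ p)).toFun y = ⨆ i : Set.range g, (i : Set.range g).1.toFun y :=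
        fun y => (hν' p y).trans (iSup_range_apply g y).symm
      have hS' : ∀ y, (ν' (W.mkQ p')).toFun y = ⨆ i : Set.range g', (i : Set.range g').1.toFun y :=
        fun y => (hν' p' y).trans (iSup_range_apply g' y).symm
      have h1 := hτ (fun i : Set.range g => i.1) (ν' (W.mkQ p)) (ν' (W.mkQ p')) hS x
      rw [h1]
      refine ciSup_le ?_
      rintro ⟨Fi, q, rfl⟩
      rw [h.tri.comm]
      have h2 := hτ (fun i : Set.range g' => i.1) (ν' (W.mkQ p')) (g q) hS' x
      rw [h2]
      refine ciSup_le ?_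
      rintro ⟨Fj, q', rfl⟩
      have h3 := h.N3 (p' + (q':V)) (p + (q:V)) x
      have harg : p' + (q':V) + (p + (q:V)) = (p + p') + (((q + q' : W)) : V) := by
        push_cast
        abel
      rw [harg] at h3
      refine h3.trans ?_
      rw [hν']
      exact le_ciSup (hb (p + p') x) (q + q')
    · -- N4
      intro P α h0 h1
      obtain ⟨p, rfl⟩ := W.mkQ_surjective P
      have e1 : α • W.mkQ p = W.mkQ (α • p) := (map_smul _ _ _).symm
      have e2 : (1 - α) • W.mkQ p = W.mkQ ((1 - α) • p) := (map_smul _ _ _).symm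
      rw [e1, e2, DistFun.le_def]
      intro x
      rw [hν']
      refine ciSup_le fun q => ?_
      have h4 := h.N4 (p + (q:V)) α h0 h1 x
      refine h4.trans ?_
      have hA : ν (α • (p + (q:V))) ≤ ν' (W.mkQ (α • p)) := by
        rw [DistFun.le_def]
        intro y
        have harg : α • (p + (q:V)) = α • p + ((α • q : W) : V) := by
          rw [smul_add]; norm_num
        rw [harg, hν']
        exact le_ciSup (hb (α • p) y) (α • q)
      have hB : ν ((1 - α) • (p + (q:V))) ≤ ν' (W.mkQ ((1 - α) • p)) := by
        rw [DistFun.le_def]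
        intro y
        have harg : (1 - α) • (p + (q:V)) = (1 - α) • p + (((1 - α) • q : W) : V) := by
          rw [smul_add]; norm_num
        rw [harg, hν']
        exact le_ciSup (hb ((1 - α) • p) y) ((1 - α) • q)
      calc (τs (ν (α • (p + (q:V)))) (ν ((1 - α) • (p + (q:V))))).toFun x
          ≤ (τs (ν' (W.mkQ (α • p))) (ν ((1 - α) • (p + (q:V))))).toFun x :=
            h.tri_s.mono _ _ _ hA x
        _ = (τs (ν ((1 - α) • (p + (q:V)))) (ν' (W.mkQ (α • p)))).toFun x := by
            rw [h.tri_s.comm]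
        _ ≤ (τs (ν' (W.mkQ ((1 - α) • p))) (ν' (W.mkQ (α • p)))).toFun x :=
            h.tri_s.mono _ _ _ hB x
        _ = (τs (ν' (W.mkQ (α • p))) (ν' (W.mkQ ((1 - α) • p)))).toFun x := by
            rw [h.tri_s.comm]
    · -- N1
      intro P
      obtain ⟨p, rfl⟩ := W.mkQ_surjective P
      constructor
      · intro hyp
        rw [Submodule.mkQ_apply, Submodule.Quotient.mk_eq_zero]
        -- p is strongly approximated by the sequence -(w n)
        have hsup : ∀ x : ℝ, 0 < x → ⨆ q : W, (ν (p + (q:V))).toFun x = 1 := by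
          intro x hx
          rw [← hν', hyp, eps0_apply_pos hx]
        set u : ℕ → ℝ := fun n => 1 / ((n : ℝ) + 1) with hu
        have hupos : ∀ n, 0 < u n := fun n => by positivity
        have hu1 : ∀ n, u n ≤ 1 := by
          intro n
          rw [hu]
          rw [div_le_one (by positivity)]
          simp
        have hchoice : ∀ n : ℕ, ∃ q : W, 1 - u n < (ν (p + (q:V))).toFun (u n) := by
          intro n
          apply exists_lt_of_lt_ciSup
          rw [hsup (u n) (hupos n)]
          linarith [hupos n]
        choose w hw using hchoice
        have htend : Filter.Tendsto (fun n => sibley (ν (p + (w n : V))) eps0)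
            Filter.atTop (nhds 0) := by
          refine squeeze_zero (fun n => sibley_nonneg _ _)
            (fun n => sibley_le_eps0 (hupos n) (hu1 n) (hw n)) ?_
          exact tendsto_one_div_add_atTop_nhds_zero_nat
        letI : TopologicalSpace V := strongTop ν
        have hclosure : p ∈ closure (W : Set V) := by
          rw [mem_closure_iff]
          intro U hU hpU
          have basis := TopologicalSpace.isTopologicalBasis_of_subbasis
            (rfl : strongTop ν = TopologicalSpace.generateFrom
              {S | ∃ (p₀ : V) (t : ℝ), 0 < t ∧ S = {q | 1 - t < (ν (q - p₀)).toFun t}})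
          obtain ⟨b, hbmem, hpb, hbU⟩ := basis.exists_subset_of_mem_open hpU hU
          obtain ⟨f, ⟨hfin, hsub⟩, rfl⟩ := hbmem
          have hev : ∀ s ∈ f, ∀ᶠ n in Filter.atTop, (-(w n : V)) ∈ s := by
            intro s hs
            obtain ⟨p₀, t₀, ht₀, rfl⟩ := hsub hs
            have hp₀ : 1 - t₀ < (ν (p - p₀)).toFun t₀ := Set.mem_sInter.mp hpb _ hs
            have hconst : Filter.Tendsto
                (fun _ : ℕ => sibley (ν (p - p₀)) (ν (p - p₀))) Filter.atTop (nhds 0) := by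
              simp only [sibley_self]
              exact tendsto_const_nhds
            have htri := h.cont (fun n => ν (p + (w n : V))) (fun _ => ν (p - p₀))
              eps0 (ν (p - p₀)) htend hconst
            have hid : τ eps0 (ν (p - p₀)) = ν (p - p₀) := by
              rw [h.tri.comm]; exact h.tri.ident _
            rw [hid] at htri
            filter_upwards [eventually_gt_of_sibley_tendsto ht₀ hp₀ _ htri] with n hn
            have h3 := h.N3 (-(p + (w n : V))) (p - p₀) t₀
            rw [h.N2 (p + (w n : V))] at h3
            have harg : -(p + (w n : V)) + (p - p₀) = -(w n : V) - p₀ := by abel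
            rw [harg] at h3
            exact lt_of_lt_of_le hn h3
          obtain ⟨n, hn⟩ := ((Filter.eventually_all_finite hfin).mpr hev).exists
          exact ⟨-(w n : V), hbU (Set.mem_sInter.mpr hn), neg_mem (w n).2⟩
        have : IsClosed (W : Set V) := hcl
        rw [this.closure_eq] at hclosure
        exact hclosure
      · intro hyp
        rw [hyp]
        exact hN1'

end Main
theorem quotient_PN_iff_closed {V : Type*} [AddCommGroup V] [Module ℝ V]
    (ν : V → DistFun) (τ τs : DistFun → DistFun → DistFun)
    (h : IsPNSpace ν τ τs) (hτ : SupCont τ) (hτs : SupCont τs)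
    (W : Submodule ℝ V)
    (ν' : V ⧸ W → DistFun)
    (hν' : ∀ (p : V) (x : ℝ),
      (ν' (W.mkQ p)).toFun x = ⨆ q : W, (ν (p + (q : V))).toFun x) :
    IsPNSpace ν' τ τs ↔ StrongClosed ν (W : Set V) := by
  exact quotient_PN_iff_closed' ν τ τs h hτ hτs W ν' hν'
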